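/- Let A and B be nonempty finite types and f : A × B → ℝ. Suppose that for every probability mass function β : B → ℝ (β(b) ≥ 0, ∑_b β(b) = 1) there exists a ∈ A with ∑_b β(b) · f(a,b) ≤ 0. Then there exists a probability mass function α : A → ℝ (α(a) ≥ 0, ∑_a α(a) = 1) such that for every b ∈ B, ∑_a α(a) · f(a,b) ≤ 0. -/

import Mathlib

theorem stmt_3 {A B : Type*} [Fintype A] [Fintype B] [Nonempty A] [Nonempty B]
    (f : A × B → ℝ)
    (h : ∀ β : B → ℝ, (∀ b, 0 ≤ β b) → (∑ b : B, β b = 1) →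
      ∃ a : A, ∑ b : B, β b * f (a, b) ≤ 0) :
    ∃ α : A → ℝ, (∀ a, 0 ≤ α a) ∧ (∑ a : A, α a = 1) ∧
      ∀ b : B, ∑ a : A, α a * f (a, b) ≤ 0 := by
  classical
  by_contra hcon
  push_neg at hcon
  -- the linear map sending weights on A to the mixed payoff vector
  let T : (A → ℝ) →ₗ[ℝ] (B → ℝ) :=
    { toFun := fun α b => ∑ a : A, α a * f (a, b)
      map_add' := by
        intro x y; funext b; simp [add_mul, Finset.sum_add_distrib]
      map_smul' := by
        intro c x; funext b; simp [Finset.mul_sum, mul_assoc] }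
  let s : Set (B → ℝ) := T '' stdSimplex ℝ A
  let t : Set (B → ℝ) := {x | ∀ b, x b ≤ 0}
  have ht_closed : IsClosed t := by
    have : t = ⋂ b : B, {x : B → ℝ | x b ≤ 0} := by
      ext x; simp [t, Set.mem_iInter]
    rw [this]
    exact isClosed_iInter fun b => isClosed_le (continuous_apply b) continuous_const
  have ht_convex : Convex ℝ t := by
    intro x hx y hy a b ha hb hab
    intro i
    have := add_nonpos (mul_nonpos_of_nonneg_of_nonpos ha (hx i))
      (mul_nonpos_of_nonneg_of_nonpos hb (hy i))
    simpa using this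
  have hs_convex : Convex ℝ s := (convex_stdSimplex ℝ A).linear_image T
  have hs_compact : IsCompact s :=
    (isCompact_stdSimplex ℝ A).image T.continuous_of_finiteDimensional
  have hdisj : Disjoint t s := by
    rw [Set.disjoint_right]
    rintro x ⟨α, hα, rfl⟩ hxt
    obtain ⟨b, hb⟩ := hcon α hα.1 hα.2
    exact absurd (hxt b) (not_le.2 hb)
  obtain ⟨ℓ, u, v, htu, huv, hsv⟩ :=
    geometric_hahn_banach_closed_compact ht_convex ht_closed hs_convex hs_compact hdisj
  have h0t : (0 : B → ℝ) ∈ t := fun b => le_refl 0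
  have hu0 : 0 < u := by have := htu 0 h0t; simpa using this
  set β : B → ℝ := fun b => ℓ (Pi.single b 1) with hβ
  have hβnonneg : ∀ b, 0 ≤ β b := by
    intro b
    by_contra hneg
    push_neg at hneg
    set c : ℝ := (u + 1) / (-β b) with hc
    have hβb : 0 < -β b := by linarith
    have hc0 : 0 < c := div_pos (by linarith) hβb
    have hmem : (-c) • (Pi.single b 1 : B → ℝ) ∈ t := by
      intro b'
      have h1 : (0 : ℝ) ≤ (Pi.single b 1 : B → ℝ) b' := by
        rcases eq_or_ne b' b with rfl | hne
        · simp
        · simp [Pi.single_apply, hne]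
      have : (-c) * (Pi.single b 1 : B → ℝ) b' ≤ 0 :=
        mul_nonpos_of_nonpos_of_nonneg (by linarith) h1
      simpa using this
    have := htu _ hmem
    rw [map_smul] at this
    have hval : (-c) • ℓ (Pi.single b 1 : B → ℝ) = u + 1 := by
      rw [smul_eq_mul]
      show -c * β b = u + 1
      rw [show -c * β b = c * (-β b) from by ring, hc, div_mul_cancel₀ _ (ne_of_gt hβb)]
    rw [hval] at this
    linarith
  have hℓ : ∀ x : B → ℝ, ℓ x = ∑ b : B, x b * β b := by
    intro x
    have hx : x = ∑ b : B, x b • (Pi.single b 1 : B → ℝ) := by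
      funext b'
      simp [Pi.single_apply, Finset.sum_ite_eq', mul_comm]
    conv_lhs => rw [hx]
    rw [map_sum]
    simp [smul_eq_mul, hβ]
  have hga : ∀ a : A, v < ∑ b : B, f (a, b) * β b := by
    intro a
    have hmem : Pi.single a (1 : ℝ) ∈ stdSimplex ℝ A := by
      constructor
      · intro a'
        rcases eq_or_ne a' a with rfl | hne
        · simp
        · simp [Pi.single_apply, hne]
      · simp [Pi.single_apply]
    have hTa : T (Pi.single a 1) = fun b => f (a, b) := by
      funext b
      simp [T, Pi.single_apply, ite_mul, Finset.sum_ite_eq']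
    have := hsv _ ⟨Pi.single a 1, hmem, rfl⟩
    rw [hTa, hℓ] at this
    exact this
  set S : ℝ := ∑ b : B, β b with hS
  have hS0 : 0 < S := by
    rcases lt_or_ge 0 S with hpos | hle
    · exact hpos
    have hSz : S = 0 := le_antisymm hle (Finset.sum_nonneg fun b _ => hβnonneg b)
    have hall : ∀ b ∈ Finset.univ, β b = 0 :=
      (Finset.sum_eq_zero_iff_of_nonneg fun b _ => hβnonneg b).1 hSz
    inhabit A
    have := hga default
    rw [Finset.sum_congr rfl (fun b _ => by rw [hall b (Finset.mem_univ b), mul_zero])] at this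
    simp at this
    linarith
  obtain ⟨a, ha⟩ := h (fun b => β b / S)
    (fun b => div_nonneg (hβnonneg b) hS0.le)
    (by rw [← Finset.sum_div, ← hS, div_self (ne_of_gt hS0)])
  have hsum : ∑ b : B, β b / S * f (a, b) = (∑ b : B, f (a, b) * β b) / S := by
    rw [Finset.sum_div]
    exact Finset.sum_congr rfl fun b _ => by ring
  rw [hsum] at ha
  have : (∑ b : B, f (a, b) * β b) ≤ 0 := by
    rcases div_nonpos_iff.1 ha with ⟨h1, h2⟩ | ⟨h1, h2⟩ <;> linarith
  linarith [hga a]
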